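/- arXiv:1405.7085 — 2 statements merged into one kernel-verified Lean document; each statement's English description precedes it below -/
import Mathlib

section
/- For a nonincreasing sequence of gaps: if 0 < r₁ ≤ r₂ ≤ ... ≤ r_i are real numbers with r_j - r_{j-1} ≤ r_{j-1} - r_{j-2} for all 3 ≤ j ≤ i and r₂ - r₁ ≤ r₁ (taking r₀ = 0 gives r₁ ≤ r₁), then (r_{i-1}^p / r₁^p) · ((r_i/r_{i-1})^p - 1)/((r₂/r₁)^p - 1) ≤ (i-1)^p for every positive integer p, provided r₂ > r₁. -/
/-- Increment comparison for powers via the geometric-sum factorization. -/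
lemma aux_pow_sub_pow (p : ℕ) (a b c : ℝ) (hb : 0 ≤ b) (hba : b ≤ a) (hac : a ≤ c) :
    a ^ p - b ^ p ≤ c ^ p - (c - (a - b)) ^ p := by
  have h1 : a ^ p - b ^ p = (∑ k ∈ Finset.range p, a ^ k * b ^ (p - 1 - k)) * (a - b) :=
    (geom_sum₂_mul a b p).symm
  have hcd : c - (c - (a - b)) = a - b := by ring
  have h2 := geom_sum₂_mul c (c - (a - b)) p
  rw [hcd] at h2
  rw [h1, ← h2]
  apply mul_le_mul_of_nonneg_right _ (by linarith)
  apply Finset.sum_le_sum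
  intro k _
  have hb' : b ≤ c - (a - b) := by linarith
  have hc : (0:ℝ) ≤ c := by linarith
  exact mul_le_mul (pow_le_pow_left₀ (by linarith) hac k)
    (pow_le_pow_left₀ hb hb' _) (pow_nonneg hb _) (pow_nonneg hc _)

/-- Volume-ratio bound from a nondecreasing sequence with nonincreasing gaps:
(r_{i-1}^p / r₁^p) · ((r_i/r_{i-1})^p - 1)/((r₂/r₁)^p - 1) ≤ (i-1)^p. -/
theorem stmt5 (i pdim : ℕ) (r : ℕ → ℝ)
    (hi : 2 ≤ i) (hp : 1 ≤ pdim)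
    (hpos : 0 < r 1)
    (hmono : ∀ j, 1 ≤ j → j < i → r j ≤ r (j + 1))
    (hgap : ∀ j, 3 ≤ j → j ≤ i → r j - r (j - 1) ≤ r (j - 1) - r (j - 2))
    (hfirst : r 2 - r 1 ≤ r 1)
    (hlt : r 1 < r 2) :
    (r (i - 1)) ^ pdim / (r 1) ^ pdim *
      (((r i / r (i - 1)) ^ pdim - 1) / ((r 2 / r 1) ^ pdim - 1)) ≤
      ((i : ℝ) - 1) ^ pdim := by
  -- r 1 ≤ r j for 1 ≤ j ≤ i
  have hr1 : ∀ j, 1 ≤ j → j ≤ i → r 1 ≤ r j := by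
    intro j
    induction j with
    | zero => omega
    | succ k ih =>
      intro h1 h2
      rcases Nat.eq_or_lt_of_le h1 with h | h
      · simp [← h]
      · have hk1 : 1 ≤ k := by omega
        have := hmono k hk1 (by omega)
        have := ih hk1 (by omega)
        linarith
  -- gaps bounded by the first gap
  have hgap2 : ∀ j, 2 ≤ j → j ≤ i → r j - r (j - 1) ≤ r 2 - r 1 := by
    intro j
    induction j with
    | zero => omega
    | succ k ih =>
      intro h1 h2
      rcases Nat.eq_or_lt_of_le h1 with h | h
      · have : k = 1 := by omega
        simp [this]
      · have hk2 : 2 ≤ k := by omega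
        rw [Nat.add_sub_cancel]
        have hg := hgap (k + 1) (by omega) h2
        have hk1 : k + 1 - 1 = k := by omega
        have hk0 : k + 1 - 2 = k - 1 := by omega
        rw [hk1, hk0] at hg
        have := ih hk2 (by omega)
        linarith
  -- upper bound on r j
  have hupper : ∀ j, 1 ≤ j → j ≤ i → r j ≤ r 1 + ((j : ℝ) - 1) * (r 2 - r 1) := by
    intro j
    induction j with
    | zero => omega
    | succ k ih =>
      intro h1 h2
      rcases Nat.eq_or_lt_of_le h1 with h | h
      · simp [← h]
      · have hk1 : 1 ≤ k := by omega
        have hg := hgap2 (k + 1) (by omega) h2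
        have hk : k + 1 - 1 = k := by omega
        rw [hk] at hg
        have := ih hk1 (by omega)
        push_cast
        nlinarith [hlt]
  set n : ℕ := i - 1 with hn
  have hn1 : 1 ≤ n := by omega
  have hncast : ((i : ℝ) - 1) = (n : ℝ) := by
    rw [hn, Nat.cast_sub (by omega), Nat.cast_one]
  have hii : n + 1 = i := by omega
  have hri1 : r 1 ≤ r n := hr1 n hn1 (by omega)
  have hrpos1 : (0:ℝ) < r n := lt_of_lt_of_le hpos hri1
  have hmono' : r n ≤ r i := by
    have := hmono n hn1 (by omega)
    rwa [hii] at this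
  have hgapi : r i - r n ≤ r 2 - r 1 := by
    have := hgap2 i hi le_rfl
    rwa [← hn] at this
  have hup : r i ≤ r 1 + ((i : ℝ) - 1) * (r 2 - r 1) := hupper i (by omega) le_rfl
  have hnR : (1:ℝ) ≤ (n:ℝ) := by exact_mod_cast hn1
  -- r i ≤ n * r 2
  have hac : r i ≤ (n:ℝ) * r 2 := by
    rw [hncast] at hup
    nlinarith
  have key := aux_pow_sub_pow pdim (r i) (r n) ((n:ℝ) * r 2) hrpos1.le hmono' hac
  -- lower bound the subtracted term
  have hlow : (n:ℝ) * r 1 ≤ (n:ℝ) * r 2 - (r i - r n) := by nlinarith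
  have hlow' : ((n:ℝ) * r 1) ^ pdim ≤ ((n:ℝ) * r 2 - (r i - r n)) ^ pdim :=
    pow_le_pow_left₀ (by positivity) hlow _
  have key2 : r i ^ pdim - r n ^ pdim ≤ (n:ℝ) ^ pdim * (r 2 ^ pdim - r 1 ^ pdim) := by
    have := key.trans (by linarith : ((n:ℝ) * r 2) ^ pdim - ((n:ℝ) * r 2 - (r i - r n)) ^ pdim
      ≤ ((n:ℝ) * r 2) ^ pdim - ((n:ℝ) * r 1) ^ pdim)
    rw [mul_pow, mul_pow] at this
    linarith [this]
  -- positivity facts for the algebra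
  have hs : (0:ℝ) < r 1 ^ pdim := pow_pos hpos _
  have hA : (0:ℝ) < r n ^ pdim := pow_pos hrpos1 _
  have hts : r 1 ^ pdim < r 2 ^ pdim :=
    pow_lt_pow_left₀ hlt hpos.le (by omega)
  have heq : r n ^ pdim / r 1 ^ pdim *
      (((r i / r n) ^ pdim - 1) / ((r 2 / r 1) ^ pdim - 1)) =
      (r i ^ pdim - r n ^ pdim) / (r 2 ^ pdim - r 1 ^ pdim) := by
    have hd1 : (r i / r n) ^ pdim - 1 = (r i ^ pdim - r n ^ pdim) / r n ^ pdim := by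
      rw [div_pow]; field_simp
    have hd2 : (r 2 / r 1) ^ pdim - 1 = (r 2 ^ pdim - r 1 ^ pdim) / r 1 ^ pdim := by
      rw [div_pow]; field_simp
    have hne2 : r 2 ^ pdim - r 1 ^ pdim ≠ 0 := by linarith
    rw [hd1, hd2]
    field_simp
  rw [show r (i - 1) = r n from rfl, heq, hncast, div_le_iff₀ (by linarith)]
  linarith
end

section
/- Mixture perturbation preserves multiplicative closeness: let μ_C be a probability measure on C with density bounded below by μ* > 0 on a subset B ⊆ C of volume Vol(B) > 0, let μ̂_good satisfy Dist_∞(μ̂_good, μ_C) ≤ ε̃/4, and define μ̂ = (1 - 2^{-m}) μ̂_good + 2^{-m} Unif(B). If 2^{-m}/(μ* Vol(B)) ≤ e^{ε̃/2}(e^{ε̃/2} - 1) and 1 - 2^{-m} ≥ e^{-ε̃/4}, then Dist_∞(μ̂, μ_C) ≤ ε̃. -/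
open MeasureTheory

/-- Mixing a multiplicatively close measure with a small uniform component on B ⊆ C
preserves multiplicative closeness to μ_C (with parameter ε̃), given the mass conditions. -/
theorem stmt16 (p : ℕ) (C B : Set (EuclideanSpace ℝ (Fin p)))
    (μC μgood : Measure (EuclideanSpace ℝ (Fin p)))
    [IsProbabilityMeasure μC] [IsProbabilityMeasure μgood]
    (μstar εt : ℝ) (m : ℕ)
    (hBC : B ⊆ C) (hB : MeasurableSet B)
    (hvol : 0 < volume B) (hμstar : 0 < μstar) (hεt : 0 < εt) (hm : 0 < m)
    (hdensity : ∀ U : Set (EuclideanSpace ℝ (Fin p)), MeasurableSet U → U ⊆ C →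
      ENNReal.ofReal μstar * volume U ≤ μC U)
    (hgood : ∀ U : Set (EuclideanSpace ℝ (Fin p)), MeasurableSet U →
      ENNReal.ofReal (Real.exp (-(εt / 4))) * μC U ≤ μgood U ∧
      μgood U ≤ ENNReal.ofReal (Real.exp (εt / 4)) * μC U)
    (hcond1 : (2:ℝ)⁻¹ ^ m / (μstar * (volume B).toReal) ≤
      Real.exp (εt / 2) * (Real.exp (εt / 2) - 1))
    (hcond2 : Real.exp (-(εt / 4)) ≤ 1 - (2:ℝ)⁻¹ ^ m) :
    let μhat : Measure (EuclideanSpace ℝ (Fin p)) :=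
      ENNReal.ofReal (1 - (2:ℝ)⁻¹ ^ m) • μgood +
        ENNReal.ofReal ((2:ℝ)⁻¹ ^ m) • ((volume B)⁻¹ • volume.restrict B)
    ∀ U : Set (EuclideanSpace ℝ (Fin p)), MeasurableSet U →
      ENNReal.ofReal (Real.exp (-εt)) * μC U ≤ μhat U ∧
      μhat U ≤ ENNReal.ofReal (Real.exp εt) * μC U := by
  intro μhat U hU
  have hμ0 : ENNReal.ofReal μstar ≠ 0 := by
    simp [ENNReal.ofReal_eq_zero]; linarith
  have hBfin : volume B ≠ ⊤ := by
    intro h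
    have h1 := hdensity B hB hBC
    rw [h, ENNReal.mul_top hμ0] at h1
    exact (h1.trans_lt (measure_lt_top μC B)).ne rfl
  have hvtop : 0 < (volume B).toReal := ENNReal.toReal_pos hvol.ne' hBfin
  have hμhat : μhat U = ENNReal.ofReal (1 - (2:ℝ)⁻¹ ^ m) * μgood U +
      ENNReal.ofReal ((2:ℝ)⁻¹ ^ m) * ((volume B)⁻¹ * volume (U ∩ B)) := by
    simp [μhat, Measure.restrict_apply hU]
  constructor
  · calc ENNReal.ofReal (Real.exp (-εt)) * μC U
        ≤ ENNReal.ofReal (Real.exp (-(εt/4)) * Real.exp (-(εt/4))) * μC U := by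
          gcongr
          rw [← Real.exp_add]
          exact Real.exp_le_exp.2 (by linarith)
      _ = ENNReal.ofReal (Real.exp (-(εt/4))) * (ENNReal.ofReal (Real.exp (-(εt/4))) * μC U) := by
          rw [ENNReal.ofReal_mul (Real.exp_nonneg _), mul_assoc]
      _ ≤ ENNReal.ofReal (1 - (2:ℝ)⁻¹ ^ m) * μgood U :=
          mul_le_mul' (ENNReal.ofReal_le_ofReal hcond2) (hgood U hU).1
      _ ≤ μhat U := by rw [hμhat]; exact le_self_add
  · have hinter : volume (U ∩ B) ≤ (ENNReal.ofReal μstar)⁻¹ * μC U := by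
      have h2 := (hdensity (U ∩ B) (hU.inter hB) (Set.inter_subset_right.trans hBC)).trans
        (measure_mono Set.inter_subset_left)
      calc volume (U ∩ B) = (ENNReal.ofReal μstar)⁻¹ * (ENNReal.ofReal μstar * volume (U ∩ B)) := by
            rw [← mul_assoc, ENNReal.inv_mul_cancel hμ0 ENNReal.ofReal_ne_top, one_mul]
        _ ≤ (ENNReal.ofReal μstar)⁻¹ * μC U := by
            gcongr
    have hcoef : ENNReal.ofReal ((2:ℝ)⁻¹ ^ m) * ((volume B)⁻¹ * (ENNReal.ofReal μstar)⁻¹) =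
        ENNReal.ofReal ((2:ℝ)⁻¹ ^ m / (μstar * (volume B).toReal)) := by
      rw [show (volume B)⁻¹ = ENNReal.ofReal ((volume B).toReal)⁻¹ by
            rw [ENNReal.ofReal_inv_of_pos hvtop, ENNReal.ofReal_toReal hBfin],
          ← ENNReal.ofReal_inv_of_pos hμstar,
          ← ENNReal.ofReal_mul (by positivity), ← ENNReal.ofReal_mul (by positivity)]
      congr 1
      field_simp
    rw [hμhat]
    calc ENNReal.ofReal (1 - (2:ℝ)⁻¹ ^ m) * μgood U +
        ENNReal.ofReal ((2:ℝ)⁻¹ ^ m) * ((volume B)⁻¹ * volume (U ∩ B))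
        ≤ ENNReal.ofReal 1 * (ENNReal.ofReal (Real.exp (εt/4)) * μC U) +
          ENNReal.ofReal ((2:ℝ)⁻¹ ^ m) * ((volume B)⁻¹ * ((ENNReal.ofReal μstar)⁻¹ * μC U)) := by
          gcongr
          · exact sub_le_self _ (by positivity)
          · exact (hgood U hU).2
      _ = (ENNReal.ofReal (Real.exp (εt/4)) +
           ENNReal.ofReal ((2:ℝ)⁻¹ ^ m) * ((volume B)⁻¹ * (ENNReal.ofReal μstar)⁻¹)) * μC U := by
          rw [ENNReal.ofReal_one, one_mul]; ring
      _ ≤ (ENNReal.ofReal (Real.exp (εt/4)) +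
           ENNReal.ofReal (Real.exp (εt/2) * (Real.exp (εt/2) - 1))) * μC U := by
          gcongr
          rw [hcoef]
          exact ENNReal.ofReal_le_ofReal hcond1
      _ ≤ ENNReal.ofReal (Real.exp εt) * μC U := by
          gcongr
          rw [← ENNReal.ofReal_add (Real.exp_nonneg _)
            (by nlinarith [Real.one_le_exp (by linarith : (0:ℝ) ≤ εt/2), Real.exp_nonneg (εt/2)])]
          apply ENNReal.ofReal_le_ofReal
          have h1 : Real.exp (εt/4) ≤ Real.exp (εt/2) := Real.exp_le_exp.2 (by linarith)
          have h2 : Real.exp (εt/2) * Real.exp (εt/2) = Real.exp εt := by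
            rw [← Real.exp_add]; ring_nf
          nlinarith
end
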